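/- Let n ≥ 2 and 5 ≤ m < n - 2 be integers, and let (tᵢ)_{2 ≤ i ≤ m} be nonnegative reals with Σᵢ i(i-1)tᵢ = n(n-1) and t₂ + (3/4)t₃ ≥ n + Σ_{i≥5}(2i - 9)tᵢ. Then f := 1 + Σᵢ (i-1)tᵢ satisfies f ≥ ((3m - 10)n² + (m² - 6m + 12)n)/(m² + 3m - 18) + 1. -/

import Mathlib

theorem stmt16 (n m : ℕ) (hn : 2 ≤ n) (hm : 5 ≤ m) (hmn : m + 2 < n)
    (t : ℕ → ℝ) (ht : ∀ i, 0 ≤ t i)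
    (hpairs : ∑ i ∈ Finset.Icc 2 m, (i : ℝ) * ((i : ℝ) - 1) * t i = n * ((n : ℝ) - 1))
    (hhirz : t 2 + (3 / 4) * t 3
      ≥ n + ∑ i ∈ Finset.Icc 5 m, (2 * (i : ℝ) - 9) * t i) :
    1 + ∑ i ∈ Finset.Icc 2 m, ((i : ℝ) - 1) * t i
      ≥ ((3 * (m : ℝ) - 10) * (n : ℝ) ^ 2 + ((m : ℝ) ^ 2 - 6 * m + 12) * n)
          / ((m : ℝ) ^ 2 + 3 * m - 18) + 1 := by
  have hm5 : (5:ℝ) ≤ (m:ℝ) := by exact_mod_cast hm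
  have hA : (0:ℝ) < (m:ℝ)^2 + 3*m - 18 := by nlinarith
  have hsplit : Finset.Icc 2 m = insert 2 (insert 3 (insert 4 (Finset.Icc 5 m))) := by
    ext x
    simp only [Finset.mem_Icc, Finset.mem_insert]
    omega
  have h2 : (2:ℕ) ∉ insert 3 (insert 4 (Finset.Icc 5 m)) := by simp
  have h3 : (3:ℕ) ∉ insert 4 (Finset.Icc 5 m) := by simp
  have h4 : (4:ℕ) ∉ Finset.Icc 5 m := by
    simp [Finset.mem_Icc]
  rw [hsplit, Finset.sum_insert h2, Finset.sum_insert h3, Finset.sum_insert h4] at hpairs ⊢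
  norm_num at hpairs ⊢
  -- key pointwise inequality on Icc 5 m
  have key : ∀ i ∈ Finset.Icc 5 m,
      ((3*(m:ℝ)-10)*(i:ℝ)*((i:ℝ)-1) - ((m:ℝ)-1)*((m:ℝ)-2)*(2*(i:ℝ)-9)) * t i
        ≤ (((m:ℝ)^2+3*(m:ℝ)-18)*((i:ℝ)-1)) * t i := by
    intro i hi
    rcases Finset.mem_Icc.mp hi with ⟨hi5, him⟩
    have hi5' : (5:ℝ) ≤ (i:ℝ) := by exact_mod_cast hi5
    apply mul_le_mul_of_nonneg_right _ (ht i)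
    rcases eq_or_lt_of_le him with h | h
    · subst h; nlinarith [hi5']
    · have h1 : (i:ℝ) + 1 ≤ (m:ℝ) := by exact_mod_cast h
      nlinarith [mul_nonneg (sub_nonneg.2 hi5') (sub_nonneg.2 hi5'),
        mul_nonneg (mul_nonneg (sub_nonneg.2 hi5') (sub_nonneg.2 hi5')) (sub_nonneg.2 hi5'),
        mul_nonneg (sub_nonneg.2 h1) (sub_nonneg.2 hi5'),
        mul_nonneg (mul_nonneg (sub_nonneg.2 h1) (sub_nonneg.2 hi5')) (sub_nonneg.2 hi5')]
  have hsum := Finset.sum_le_sum key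
  set P5 := ∑ i ∈ Finset.Icc 5 m, (i:ℝ)*((i:ℝ)-1)*t i with hP5
  set S5 := ∑ i ∈ Finset.Icc 5 m, ((i:ℝ)-1)*t i with hS5
  set H5 := ∑ i ∈ Finset.Icc 5 m, (2*(i:ℝ)-9)*t i with hH5
  have e1 : ∑ i ∈ Finset.Icc 5 m,
      (((3*(m:ℝ)-10)*(i:ℝ)*((i:ℝ)-1) - ((m:ℝ)-1)*((m:ℝ)-2)*(2*(i:ℝ)-9)) * t i)
      = (3*(m:ℝ)-10) * P5 - ((m:ℝ)-1)*((m:ℝ)-2) * H5 := by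
    rw [hP5, hH5, Finset.mul_sum, Finset.mul_sum, ← Finset.sum_sub_distrib]
    exact Finset.sum_congr rfl (fun i _ => by ring)
  have e2 : ∑ i ∈ Finset.Icc 5 m, ((((m:ℝ)^2+3*(m:ℝ)-18)*((i:ℝ)-1)) * t i)
      = ((m:ℝ)^2+3*(m:ℝ)-18) * S5 := by
    rw [hS5, Finset.mul_sum]
    exact Finset.sum_congr rfl (fun i _ => by ring)
  rw [e1, e2] at hsum
  have hhirz' : (n:ℝ) + H5 ≤ t 2 + 3/4 * t 3 := hhirz
  have hmul : ((m:ℝ)-1)*((m:ℝ)-2)*((n:ℝ) + H5) ≤ ((m:ℝ)-1)*((m:ℝ)-2)*(t 2 + 3/4 * t 3) :=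
    mul_le_mul_of_nonneg_left hhirz' (by nlinarith)
  have hp' : (3*(m:ℝ)-10)*(2 * t 2 + 6 * t 3 + 12 * t 4 + P5)
      = (3*(m:ℝ)-10)*((n:ℝ)*((n:ℝ)-1)) := by
    rw [show 2 * t 2 + 6 * t 3 + 12 * t 4 + P5 = (n:ℝ)*((n:ℝ)-1) by linarith [hpairs]]
  have hc3 : (0:ℝ) ≤ (5*(m:ℝ)^2 - 39*(m:ℝ) + 90)/4 * t 3 :=
    mul_nonneg (by nlinarith) (ht 3)
  have hc4 : (0:ℝ) ≤ (3*((m:ℝ)^2 - 9*(m:ℝ) + 22)) * t 4 :=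
    mul_nonneg (by nlinarith) (ht 4)
  have main : ((3 * (m:ℝ) - 10) * (n:ℝ) ^ 2 + ((m:ℝ) ^ 2 - 6 * (m:ℝ) + 12) * (n:ℝ))
      ≤ (t 2 + 2 * t 3 + 3 * t 4 + S5) * ((m:ℝ)^2 + 3*(m:ℝ) - 18) := by
    linarith [hsum, hmul, hp', hc3, hc4]
  have hdiv : ((3 * (m:ℝ) - 10) * (n:ℝ) ^ 2 + ((m:ℝ) ^ 2 - 6 * (m:ℝ) + 12) * (n:ℝ))
      / ((m:ℝ)^2 + 3*(m:ℝ) - 18) ≤ t 2 + 2 * t 3 + 3 * t 4 + S5 := by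
    rw [div_le_iff₀ hA]; exact main
  linarith [hdiv]
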